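/- arXiv:1812.08223 — 2 statements merged into one kernel-verified Lean document; each statement's English description precedes it below -/
import Mathlib

section
/- For any positive semidefinite operator σ on C^M ⊗ C^M with ‖T_B(σ)‖₁ ≤ 1 (where T_B is partial transpose on the second factor and ‖·‖₁ the trace norm), the overlap with the maximally entangled state satisfies Tr[Φ σ] ≤ 1/M. -/
open Matrix
open scoped ComplexOrder

noncomputable section

/-- Trace norm of a complex square matrix: `‖A‖₁ = Tr √(AᴴA)`. -/
def traceNorm {n : Type*} [Fintype n] [DecidableEq n] (A : Matrix n n ℂ) : ℝ :=
  (((Matrix.posSemidef_conjTranspose_mul_self A).1.eigenvectorUnitary : Matrix n n ℂ) *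
    diagonal (((↑) : ℝ → ℂ) ∘ Real.sqrt ∘ (Matrix.posSemidef_conjTranspose_mul_self A).1.eigenvalues) *
    (star (Matrix.posSemidef_conjTranspose_mul_self A).1.eigenvectorUnitary : Matrix n n ℂ)).trace.re

/-- Partial transpose on the second tensor factor. -/
def ptB {α β : Type*} (A : Matrix (α × β) (α × β) ℂ) : Matrix (α × β) (α × β) ℂ :=
  fun x y => A (x.1, y.2) (y.1, x.2)

/-- The maximally entangled state `Φ = |Φ⟩⟨Φ|` with `|Φ⟩ = (1/√M) ∑ᵢ |i⟩⊗|i⟩`. -/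
def maxEnt (M : ℕ) : Matrix (Fin M × Fin M) (Fin M × Fin M) ℂ :=
  fun x y => if x.1 = x.2 ∧ y.1 = y.2 then (1 / (M : ℂ)) else 0

/-- The swap operator on `C^M ⊗ C^M`. -/
def swapOp (M : ℕ) : Matrix (Fin M × Fin M) (Fin M × Fin M) ℂ :=
  fun x y => if x.1 = y.2 ∧ x.2 = y.1 then 1 else 0

lemma swapOp_herm (M : ℕ) : (swapOp M).IsHermitian := by
  ext x y
  simp only [conjTranspose_apply, swapOp]
  split_ifs with h1 h2 h2 <;> simp_all [and_comm, eq_comm]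

lemma swapOp_mul_self (M : ℕ) : swapOp M * swapOp M = 1 := by
  ext ⟨a,b⟩ ⟨c,d⟩
  simp [swapOp, mul_apply, Fintype.sum_prod_type, one_apply, Prod.ext_iff, ite_and,
    Finset.sum_ite_eq, Finset.sum_ite_eq', eq_comm]

lemma swapOp_unitary (M : ℕ) : swapOp M ∈ Matrix.unitaryGroup (Fin M × Fin M) ℂ := by
  rw [Matrix.mem_unitaryGroup_iff]
  rw [show star (swapOp M) = swapOp M from (swapOp_herm M)]
  exact swapOp_mul_self M

lemma ptB_herm {M : ℕ} {σ : Matrix (Fin M × Fin M) (Fin M × Fin M) ℂ}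
    (hσ : σ.IsHermitian) : (ptB σ).IsHermitian := by
  ext x y
  simp only [conjTranspose_apply, ptB]
  conv_lhs => rw [← hσ.eq]
  simp [conjTranspose_apply]

lemma trace_key (M : ℕ) (σ : Matrix (Fin M × Fin M) (Fin M × Fin M) ℂ) :
    (maxEnt M * σ).trace = (M : ℂ)⁻¹ * (swapOp M * ptB σ).trace := by
  simp only [Matrix.trace, Matrix.diag, mul_apply, maxEnt, swapOp, ptB,
    Finset.mul_sum, Fintype.sum_prod_type]
  rw [Finset.sum_comm]
  congr 1; ext a
  rw [Finset.sum_comm]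
  congr 1; ext b
  simp only [ite_mul, zero_mul, one_mul, ite_and, mul_ite, mul_zero,
    Finset.sum_ite_eq, Finset.sum_ite_eq', Finset.mem_univ, if_true]
  simp [one_div]

open scoped MatrixOrder

/-- Key analytic bound: for a unitary `F` and Hermitian `X`,
`Re Tr(F X) ≤ ‖X‖₁`. -/
lemma re_trace_unitary_mul_le {n : Type*} [Fintype n] [DecidableEq n]
    {F X : Matrix n n ℂ} (hF : F ∈ Matrix.unitaryGroup n ℂ) (hX : X.IsHermitian) :
    ((F * X).trace).re ≤ traceNorm X := by
  set U : Matrix n n ℂ := (hX.eigenvectorUnitary : Matrix n n ℂ) with hUdef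
  set lam : n → ℝ := hX.eigenvalues
  have hUU : U * star U = 1 := (Matrix.mem_unitaryGroup_iff).mp hX.eigenvectorUnitary.2
  have hUU' : star U * U = 1 := (Matrix.mem_unitaryGroup_iff').mp hX.eigenvectorUnitary.2
  -- the absolute value of X
  set S : Matrix n n ℂ := U * diagonal (fun i => ((|lam i| : ℝ) : ℂ)) * star U with hSdef
  have hS : S.PosSemidef := by
    rw [hSdef, Matrix.star_eq_conjTranspose]
    exact Matrix.PosSemidef.mul_mul_conjTranspose_same
      (Matrix.posSemidef_diagonal_iff.mpr fun i => by positivity) U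
  have hspec : X = U * diagonal (RCLike.ofReal ∘ lam) * star U := hX.spectral_theorem
  have habs : diagonal (fun i => ((|lam i| : ℝ) : ℂ)) * diagonal (fun i => ((|lam i| : ℝ) : ℂ))
      = diagonal (RCLike.ofReal ∘ lam) * diagonal (RCLike.ofReal ∘ lam) := by
    rw [diagonal_mul_diagonal, diagonal_mul_diagonal]
    ext i j
    rcases eq_or_ne i j with rfl | h
    · rw [diagonal_apply_eq, diagonal_apply_eq]
      simp only [Function.comp]
      norm_cast
      exact congrArg Complex.ofReal (abs_mul_abs_self (lam i))
    · rw [diagonal_apply_ne _ h, diagonal_apply_ne _ h]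
  have key : ∀ A B : Matrix n n ℂ, (U * A * star U) * (U * B * star U) = U * (A * B) * star U := by
    intro A B
    rw [show (U * A * star U) * (U * B * star U) = U * (A * ((star U * U) * B)) * star U
      from by noncomm_ring]
    rw [hUU', one_mul]
  have hSsq : S ^ 2 = Xᴴ * X := by
    rw [hX.eq, pow_two, hSdef]
    conv_rhs => rw [hspec]
    rw [key, key, habs]
  have hsqrt : ((Matrix.posSemidef_conjTranspose_mul_self X).1.eigenvectorUnitary : Matrix n n ℂ) *
      diagonal (((↑) : ℝ → ℂ) ∘ Real.sqrt ∘
        (Matrix.posSemidef_conjTranspose_mul_self X).1.eigenvalues) *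
      (star (Matrix.posSemidef_conjTranspose_mul_self X).1.eigenvectorUnitary : Matrix n n ℂ) = S := by
    have hP := Matrix.posSemidef_conjTranspose_mul_self X
    have h1 : CFC.sqrt (Xᴴ * X) = S :=
      CFC.sqrt_unique (by rw [← pow_two, hSsq]) hS.nonneg
    rw [CFC.sqrt_eq_cfc, cfc_nnreal_eq_real _ _ hP.nonneg, hP.1.cfc_eq] at h1
    rw [← h1]
    simp only [Matrix.IsHermitian.cfc, Unitary.conjStarAlgAut_apply]
    unfold Real.sqrt
    rfl
  have htrS : traceNorm X = ∑ i, |lam i| := by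
    rw [traceNorm, hsqrt, hSdef, Matrix.trace_mul_cycle, hUU', one_mul,
      Matrix.trace_diagonal]
    rw [Complex.re_sum]
    simp
  -- the conjugated unitary
  set G : Matrix n n ℂ := star U * F * U with hGdef
  have hG : G * star G = 1 := by
    have hFF : F * star F = 1 := (Matrix.mem_unitaryGroup_iff).mp hF
    rw [hGdef]
    simp only [StarMul.star_mul, star_star]
    rw [show star U * F * U * (star U * (star F * U)) = star U * (F * ((U * star U) * star F)) * U
      from by noncomm_ring]
    rw [hUU, one_mul, hFF, mul_one, hUU']
  have hGdiag : ∀ i, ‖G i i‖ ≤ 1 := by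
    intro i
    have h1 : (G * star G) i i = 1 := by rw [hG]; simp
    have h2 : ∑ j, ‖G i j‖ ^ 2 = 1 := by
      have h3 : ((∑ j, ‖G i j‖ ^ 2 : ℝ) : ℂ) = 1 := by
        rw [← h1, Matrix.mul_apply]
        push_cast
        congr 1; ext j
        rw [Matrix.star_apply, RCLike.star_def, RCLike.mul_conj]
        norm_cast
      exact_mod_cast h3
    nlinarith [Finset.single_le_sum (f := fun j => ‖G i j‖ ^ 2)
      (fun j _ => by positivity) (Finset.mem_univ i), norm_nonneg (G i i)]
  -- compute the trace
  have htr : (F * X).trace = ∑ i, G i i * ((lam i : ℝ) : ℂ) := by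
    conv_lhs => rw [hspec]
    rw [show F * (U * diagonal (RCLike.ofReal ∘ lam) * star U) =
      F * U * diagonal (RCLike.ofReal ∘ lam) * star U from by noncomm_ring,
      Matrix.trace_mul_cycle]
    rw [show star U * (F * U) = G from by rw [hGdef, Matrix.mul_assoc]]
    rw [Matrix.trace]
    congr 1; ext i
    rw [Matrix.diag_apply, Matrix.mul_diagonal]
    rfl
  rw [htr, htrS, Complex.re_sum]
  apply Finset.sum_le_sum
  intro i _
  have h1 : (G i i * ((lam i : ℝ) : ℂ)).re = (G i i).re * lam i := by
    simp [Complex.mul_re]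
  rw [h1]
  calc (G i i).re * lam i ≤ |(G i i).re * lam i| := le_abs_self _
    _ = |(G i i).re| * |lam i| := abs_mul _ _
    _ ≤ 1 * |lam i| := by
        apply mul_le_mul_of_nonneg_right _ (abs_nonneg _)
        exact le_trans (Complex.abs_re_le_norm _) (hGdiag i)
    _ = |lam i| := one_mul _

/-- For any positive semidefinite `σ` with `‖T_B(σ)‖₁ ≤ 1`, the overlap with the
maximally entangled state satisfies `Tr[Φ σ] ≤ 1/M`. -/
theorem maxEnt_overlap_le_of_pptPrime (M : ℕ) (hM : 0 < M)
    (σ : Matrix (Fin M × Fin M) (Fin M × Fin M) ℂ) (hσ : σ.PosSemidef)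
    (hppt : traceNorm (ptB σ) ≤ 1) :
    ((maxEnt M * σ).trace).re ≤ 1 / M := by
  have hX : (ptB σ).IsHermitian := ptB_herm hσ.isHermitian
  have hb : (((swapOp M) * ptB σ).trace).re ≤ 1 :=
    le_trans (re_trace_unitary_mul_le (swapOp_unitary M) hX) hppt
  rw [trace_key]
  rw [show ((M : ℂ))⁻¹ = (((M : ℝ)⁻¹ : ℝ) : ℂ) from by push_cast; ring]
  rw [Complex.re_ofReal_mul]
  rw [one_div]
  calc (M : ℝ)⁻¹ * (((swapOp M) * ptB σ).trace).re ≤ (M : ℝ)⁻¹ * 1 := by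
        apply mul_le_mul_of_nonneg_left hb (by positivity)
    _ = (M : ℝ)⁻¹ := mul_one _

end
end

section
/- For quantum states ρ and σ on the same finite-dimensional Hilbert space and any completely positive trace-preserving map Λ (represented as conjugation by Kraus operators), the max-relative entropy satisfies data processing: D_max(Λ(ρ)‖Λ(σ)) ≤ D_max(ρ‖σ). -/
open Matrix
open scoped ComplexOrder BigOperators Classical

noncomputable section


/-- Feasible set for the max-relative entropy: `{λ > 0 : ρ ≤ λσ}`. -/
def dmaxSet {ι : Type*} [Fintype ι] (ρ σ : Matrix ι ι ℂ) : Set ℝ :=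
  {l : ℝ | 0 < l ∧ (l • σ - ρ).PosSemidef}

/-- Max-relative entropy `D_max(ρ‖σ) = log₂ inf{λ > 0 : ρ ≤ λσ}`, with value `+∞`
if no such `λ` exists. -/

def Dmax {ι : Type*} [Fintype ι] (ρ σ : Matrix ι ι ℂ) : EReal :=
  if (dmaxSet ρ σ).Nonempty then ((Real.logb 2 (sInf (dmaxSet ρ σ)) : ℝ) : EReal) else ⊤

lemma psd_trace_nonneg {ι : Type*} [Fintype ι] [DecidableEq ι] {M : Matrix ι ι ℂ}
    (h : M.PosSemidef) : 0 ≤ M.trace := by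
  rw [Matrix.trace]
  apply Finset.sum_nonneg
  intro i _
  have := h.diag_nonneg (i := i)
  simpa [dotProduct, Matrix.mulVec, Pi.single_apply] using this

lemma psd_sum {ι : Type*} [Fintype ι] {m : ℕ} (f : Fin m → Matrix ι ι ℂ)
    (h : ∀ k, (f k).PosSemidef) : (∑ k, f k).PosSemidef := by
  classical
  induction (Finset.univ : Finset (Fin m)) using Finset.induction with
  | empty => simpa using Matrix.PosSemidef.zero
  | insert _ _ hx ih =>
    rw [Finset.sum_insert hx]
    exact (h _).add ih

/-- Data processing for the max-relative entropy under a quantum channel given in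
Kraus form: `D_max(Λ(ρ)‖Λ(σ)) ≤ D_max(ρ‖σ)`. -/
theorem dmax_data_processing {ι : Type*} [Fintype ι] [DecidableEq ι]
    (m : ℕ) (K : Fin m → Matrix ι ι ℂ)
    (hK : ∑ k, (K k)ᴴ * K k = 1)
    (ρ σ : Matrix ι ι ℂ)
    (hρ : ρ.PosSemidef) (hρt : ρ.trace = 1)
    (hσ : σ.PosSemidef) (hσt : σ.trace = 1) :
    Dmax (∑ k, K k * ρ * (K k)ᴴ) (∑ k, K k * σ * (K k)ᴴ) ≤ Dmax ρ σ := by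
  set ρ' := ∑ k, K k * ρ * (K k)ᴴ with hρ'
  set σ' := ∑ k, K k * σ * (K k)ᴴ with hσ'
  -- channel preserves trace
  have htrace : ∀ (M : Matrix ι ι ℂ), (∑ k, K k * M * (K k)ᴴ).trace = M.trace := by
    intro M
    rw [Matrix.trace_sum]
    calc ∑ k, (K k * M * (K k)ᴴ).trace = ∑ k, ((K k)ᴴ * K k * M).trace := by
          refine Finset.sum_congr rfl fun k _ => ?_
          rw [Matrix.trace_mul_cycle]
        _ = ((∑ k, (K k)ᴴ * K k) * M).trace := by
          rw [Finset.sum_mul, Matrix.trace_sum]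
        _ = M.trace := by rw [hK, one_mul]
  -- the feasible set is mapped into the feasible set
  have hsub : dmaxSet ρ σ ⊆ dmaxSet ρ' σ' := by
    rintro l ⟨hl, hpsd⟩
    refine ⟨hl, ?_⟩
    have : (∑ k, K k * (l • σ - ρ) * (K k)ᴴ) = l • σ' - ρ' := by
      rw [hρ', hσ', Finset.smul_sum, ← Finset.sum_sub_distrib]
      refine Finset.sum_congr rfl fun k _ => ?_
      rw [Matrix.mul_sub, Matrix.sub_mul, Matrix.mul_smul, Matrix.smul_mul]
    rw [← this]
    exact psd_sum _ fun k => hpsd.mul_mul_conjTranspose_same (K k)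
  -- every feasible l is ≥ 1
  have hone : ∀ (τ θ : Matrix ι ι ℂ), τ.trace = 1 → θ.trace = 1 →
      ∀ l ∈ dmaxSet τ θ, (1:ℝ) ≤ l := by
    rintro τ θ hτ hθ l ⟨hl, hpsd⟩
    have h0 : (0:ℂ) ≤ (l • θ - τ).trace := psd_trace_nonneg hpsd
    rw [Matrix.trace_sub, Matrix.trace_smul, hτ, hθ, Complex.real_smul, mul_one] at h0
    rw [Complex.le_def] at h0
    simp only [Complex.sub_re, Complex.ofReal_re, Complex.one_re, Complex.zero_re] at h0
    linarith [h0.1]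
  have hρ't : ρ'.trace = 1 := by rw [hρ', htrace, hρt]
  have hσ't : σ'.trace = 1 := by rw [hσ', htrace, hσt]
  unfold Dmax
  by_cases hne : (dmaxSet ρ σ).Nonempty
  · have hne' : (dmaxSet ρ' σ').Nonempty := hne.mono hsub
    rw [if_pos hne, if_pos hne']
    have hbdd : BddBelow (dmaxSet ρ' σ') := ⟨1, fun l hl => hone ρ' σ' hρ't hσ't l hl⟩
    have hle : sInf (dmaxSet ρ' σ') ≤ sInf (dmaxSet ρ σ) := csInf_le_csInf hbdd hne hsub
    have hpos : (0:ℝ) < sInf (dmaxSet ρ' σ') :=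
      lt_of_lt_of_le one_pos (le_csInf hne' (hone ρ' σ' hρ't hσ't))
    exact_mod_cast Real.logb_le_logb_of_le one_lt_two hpos hle
  · rw [if_neg hne]
    exact le_top

end
end
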